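/- Let 𝔽_q be a finite field, n ≥ 1, and F : 𝔽_q^n → 𝔽_q^n a bijection. Let W be an 𝔽_q-subspace of the space of functions 𝔽_q^n → 𝔽_q with φ ∘ F ∈ W for all φ ∈ W and containing all coordinate functions χ_i, and let ψ_1, ..., ψ_N be a basis of W. Let M be the N × N matrix over 𝔽_q determined by ψ_i ∘ F = Σ_j M_{ij} ψ_j for each i, and let v_i ∈ 𝔽_q^N be the coordinate vector of χ_i, i.e., χ_i = Σ_j (v_i)_j ψ_j. Then M is invertible and for each i the i-th coordinate function g_i = χ_i ∘ F^{-1} of the inverse map satisfies g_i = Σ_j (v_i^T M^{-1})_j ψ_j, i.e., g_i(x) = Σ_j (Σ_k (v_i)_k (M^{-1})_{kj}) ψ_j(x) for all x ∈ 𝔽_q^n. -/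
import Mathlib


/-- Let `F : 𝔽_q^n → 𝔽_q^n` be a bijection, `W` an `F*`-invariant subspace of functions
containing all coordinate functions, with basis `ψ_1, …, ψ_N`. If `M` represents the
reduced Koopman operator (`ψ_i ∘ F = ∑_j M_{ij} ψ_j`) and `v_i` is the coordinate vector
of `χ_i`, then `M` is invertible and the `i`-th coordinate function of `F⁻¹` is
`∑_j (v_iᵀ M⁻¹)_j ψ_j`. -/
theorem stmt_9 {K : Type*} [Field K] [Fintype K] {n : ℕ} (hn : 1 ≤ n)
    (F : (Fin n → K) → (Fin n → K)) (hF : Function.Bijective F)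
    (W : Submodule K ((Fin n → K) → K))
    (hinv : ∀ φ ∈ W, φ ∘ F ∈ W)
    (hχ : ∀ i : Fin n, (fun x : Fin n → K => x i) ∈ W)
    (N : ℕ) (ψ : Fin N → ((Fin n → K) → K))
    (hψ_indep : LinearIndependent K ψ)
    (hψ_span : Submodule.span K (Set.range ψ) = W)
    (M : Matrix (Fin N) (Fin N) K)
    (hM : ∀ i : Fin N, ψ i ∘ F = fun x => ∑ j : Fin N, M i j * ψ j x)
    (v : Fin n → Fin N → K)
    (hv : ∀ i : Fin n, (fun x : Fin n → K => x i) = fun x => ∑ j : Fin N, v i j * ψ j x) :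
    IsUnit M ∧
      ∀ (i : Fin n) (x : Fin n → K),
        Function.invFun F x i = ∑ j : Fin N, (∑ k : Fin N, v i k * M⁻¹ k j) * ψ j x := by
  have hMψ : ∀ i y, ψ i (F y) = ∑ j : Fin N, M i j * ψ j y := fun i y =>
    congrFun (hM i) y
  -- trivial left kernel
  have hker : ∀ c : Fin N → K, Matrix.vecMul c M = 0 → c = 0 := by
    intro c hc
    have hcomp : ∀ y, ∑ i : Fin N, c i * ψ i (F y) = 0 := by
      intro y
      calc ∑ i : Fin N, c i * ψ i (F y)
          = ∑ i : Fin N, ∑ j : Fin N, c i * M i j * ψ j y := by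
            simp_rw [hMψ, Finset.mul_sum, mul_assoc]
        _ = ∑ j : Fin N, (Matrix.vecMul c M) j * ψ j y := by
            rw [Finset.sum_comm]
            simp [Matrix.vecMul, dotProduct, Finset.sum_mul]
        _ = 0 := by simp [hc]
    have hzero : ∀ z, ∑ i : Fin N, c i * ψ i z = 0 := by
      intro z
      obtain ⟨y, rfl⟩ := hF.2 z
      exact hcomp y
    have := Fintype.linearIndependent_iff.mp hψ_indep c ?_
    · funext i; exact this i
    · funext z
      simpa [Finset.sum_apply] using hzero z
  have hdet : M.det ≠ 0 := by
    intro h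
    obtain ⟨c, hc0, hc⟩ := Matrix.exists_vecMul_eq_zero_iff.mpr h
    exact hc0 (hker c hc)
  have hunit : IsUnit M := (Matrix.isUnit_iff_isUnit_det M).mpr (isUnit_iff_ne_zero.mpr hdet)
  refine ⟨hunit, fun i x => ?_⟩
  have hMM : M⁻¹ * M = 1 := Matrix.nonsing_inv_mul M (isUnit_iff_ne_zero.mpr hdet)
  set w : Fin N → K := Matrix.vecMul (v i) M⁻¹ with hw
  have hwM : Matrix.vecMul w M = v i := by
    rw [hw, Matrix.vecMul_vecMul, hMM, Matrix.vecMul_one]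
  have hg : ∀ y, ∑ j : Fin N, w j * ψ j (F y) = y i := by
    intro y
    calc ∑ j : Fin N, w j * ψ j (F y)
        = ∑ j : Fin N, ∑ k : Fin N, w j * M j k * ψ k y := by
          simp_rw [hMψ, Finset.mul_sum, mul_assoc]
      _ = ∑ k : Fin N, (Matrix.vecMul w M) k * ψ k y := by
          rw [Finset.sum_comm]
          simp [Matrix.vecMul, dotProduct, Finset.sum_mul]
      _ = y i := by rw [hwM]; exact (congrFun (hv i) y).symm
  have hx : F (Function.invFun F x) = x := Function.rightInverse_invFun hF.2 x
  have := hg (Function.invFun F x)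
  rw [hx] at this
  rw [← this]
  rfl
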